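/- arXiv:1710.03115 — 12 statements merged into one kernel-verified Lean document; each statement's English description precedes it below -/
import Mathlib

section
/- Let P be a partially ordered set and let M be a collection of subsets of P containing all singleton sets. Then a subset U of P is τ_M-open (i.e., whenever a net in P M-converges to a point of U, the net is eventually in U) if and only if: (1) U is an upper set, and (2) for every M₀ ∈ M having a supremum with ⋁M₀ ∈ U, there exists a finite subset N ⊆ M₀ such that every upper bound of N lies in U. -/
universe u

/-- `e` is an eventual lower bound of the net `x`. -/
def EvLB {P : Type u} [PartialOrder P] {ι : Type u} [Preorder ι]
    (x : ι → P) (e : P) : Prop :=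
  ∃ i₀ : ι, ∀ i : ι, i₀ ≤ i → e ≤ x i

/-- The net `x` M-converges to `y`: there is `M₀ ∈ M` with a supremum, all of whose
elements are eventual lower bounds of the net, whose supremum is above `y`. -/
def MConv {P : Type u} [PartialOrder P] (M : Set (Set P)) {ι : Type u} [Preorder ι]
    (x : ι → P) (y : P) : Prop :=
  ∃ M₀ ∈ M, (∀ m ∈ M₀, EvLB x m) ∧ ∃ s : P, IsLUB M₀ s ∧ y ≤ s

/-- `U` is τ_M-open: every net that M-converges to a point of `U` is eventually in `U`.
(Nets are indexed by nonempty directed preordered sets.) -/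
def TauMOpen {P : Type u} [PartialOrder P] (M : Set (Set P)) (U : Set P) : Prop :=
  ∀ (ι : Type u) [Preorder ι] [Nonempty ι],
    (∀ i j : ι, ∃ k : ι, i ≤ k ∧ j ≤ k) →
    ∀ x : ι → P, ∀ y ∈ U, MConv M x y →
    ∃ i₀ : ι, ∀ i : ι, i₀ ≤ i → x i ∈ U

/-- The M-below relation: `x ≪_M y`. -/
def MBelow {P : Type u} [PartialOrder P] (M : Set (Set P)) (x y : P) : Prop :=
  ∀ M₀ ∈ M, ∀ s : P, IsLUB M₀ s → y ≤ s → ∃ m ∈ M₀, x ≤ m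

/-- The collection σ_M of upper sets inaccessible by existing suprema of members of `M`. -/
def SigmaM {P : Type u} [PartialOrder P] (M : Set (Set P)) : Set (Set P) :=
  {U | IsUpperSet U ∧ ∀ M₀ ∈ M, ∀ s : P, IsLUB M₀ s → s ∈ U → (U ∩ M₀).Nonempty}

/-- M^∧ : the collection of lower closures of members of `M`. -/
def MHat {P : Type u} [PartialOrder P] (M : Set (Set P)) : Set (Set P) :=
  {A | ∃ M₀ ∈ M, A = {x | ∃ m ∈ M₀, x ≤ m}}

/-- `P` is M-continuous. -/
def MCont {P : Type u} [PartialOrder P] (M : Set (Set P)) : Prop :=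
  ∀ y : P, {x | MBelow M x y} ∈ MHat M ∧ IsLUB {x | MBelow M x y} y


/-- Auxiliary index type for the net used in the proof of `stmt0`. -/
structure StmtIdx (P : Type u) [PartialOrder P] (M₀ U : Set P) : Type u where
  N : Finset P
  p : P
  hN : (N : Set P) ⊆ M₀
  hub : p ∈ upperBounds (N : Set P)
  hpU : p ∉ U

instance {P : Type u} [PartialOrder P] (M₀ U : Set P) : Preorder (StmtIdx P M₀ U) where
  le a b := a.N ⊆ b.N
  lt a b := a.N ⊆ b.N ∧ ¬ b.N ⊆ a.N
  le_refl a := Finset.Subset.refl _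
  le_trans a b c hab hbc := Finset.Subset.trans hab hbc
  lt_iff_le_not_ge _ _ := Iff.rfl

/-- A subset `U` of a poset `P` is τ_M-open iff (1) `U` is an upper set and
(2) for every `M₀ ∈ M` with a supremum lying in `U`, there is a finite `N ⊆ M₀`
all of whose upper bounds lie in `U`. -/
theorem stmt0 {P : Type u} [PartialOrder P] (M : Set (Set P))
    (hM : ∀ p : P, {p} ∈ M) (U : Set P) :
    TauMOpen M U ↔
      IsUpperSet U ∧
        ∀ M₀ ∈ M, ∀ s : P, IsLUB M₀ s → s ∈ U →
          ∃ N : Finset P, (N : Set P) ⊆ M₀ ∧ upperBounds (N : Set P) ⊆ U := by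
  constructor
  · intro h
    constructor
    · intro a b hab ha
      obtain ⟨i₀, hi⟩ := h PUnit.{u+1} (fun _ _ => ⟨PUnit.unit, le_refl _, le_refl _⟩)
        (fun _ => b) a ha
        ⟨{b}, hM b, by
          intro m hm
          rw [Set.mem_singleton_iff] at hm
          subst hm
          exact ⟨PUnit.unit, fun _ _ => le_refl _⟩,
         b, isLUB_singleton, hab⟩
      exact hi i₀ (le_refl _)
    · intro M₀ hM₀ s hs hsU
      by_contra hcon
      push_neg at hcon
      have hcon' : ∀ N : Finset P, (N : Set P) ⊆ M₀ →
          ∃ p, p ∈ upperBounds (N : Set P) ∧ p ∉ U := by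
        intro N hN
        exact Set.not_subset.mp (hcon N hN)
      classical
      set ι := StmtIdx P M₀ U with hι
      have hemp : ∃ p, p ∈ upperBounds ((∅ : Finset P) : Set P) ∧ p ∉ U := by
        apply hcon' ∅
        simp
      obtain ⟨p₀, hp₀, hp₀U⟩ := hemp
      haveI : Nonempty ι := ⟨⟨∅, p₀, by simp, hp₀, hp₀U⟩⟩
      have hdir : ∀ i j : ι, ∃ k : ι, i ≤ k ∧ j ≤ k := by
        intro i j
        have hsub : ((i.N ∪ j.N : Finset P) : Set P) ⊆ M₀ := by
          rw [Finset.coe_union]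
          exact Set.union_subset i.hN j.hN
        obtain ⟨p, hp, hpU⟩ := hcon' (i.N ∪ j.N) hsub
        refine ⟨⟨i.N ∪ j.N, p, hsub, hp, hpU⟩, ?_, ?_⟩
        · exact Finset.subset_union_left
        · exact Finset.subset_union_right
      have hconv : MConv M (fun i : ι => i.p) s := by
        refine ⟨M₀, hM₀, ?_, s, hs, le_refl _⟩
        intro m hm
        obtain ⟨p, hp, hpU⟩ := hcon' {m} (by simpa using hm)
        refine ⟨⟨{m}, p, by simpa using hm, hp, hpU⟩, ?_⟩
        intro i hi
        exact i.hub (hi (Finset.mem_singleton_self m))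
      obtain ⟨i₀, hi₀⟩ := h ι hdir (fun i : ι => i.p) s hsU hconv
      exact i₀.hpU (hi₀ i₀ (le_refl _))
  · rintro ⟨hup, hfin⟩ ι _ _ hdir x y hy ⟨M₀, hM₀, hev, s, hs, hys⟩
    have hsU : s ∈ U := hup hys hy
    obtain ⟨N, hNsub, hNub⟩ := hfin M₀ hM₀ s hs hsU
    -- find common index dominating the eventual lower bound indices of all m ∈ N
    have key : ∀ T : Finset P, (T : Set P) ⊆ M₀ →
        ∃ i₀ : ι, ∀ i : ι, i₀ ≤ i → ∀ m ∈ T, m ≤ x i := by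
      classical
      intro T
      induction T using Finset.induction_on with
      | empty => exact fun _ => ⟨Classical.arbitrary ι, fun i _ m hm => absurd hm (by simp)⟩
      | @insert a t ha ih =>
        intro hsub'
        have hasub : (t : Set P) ⊆ M₀ := fun z hz => hsub' (by simp [hz])
        obtain ⟨i₁, hi₁⟩ := ih hasub
        obtain ⟨i₂, hi₂⟩ := hev a (hsub' (by simp))
        obtain ⟨k, hk₁, hk₂⟩ := hdir i₁ i₂
        refine ⟨k, fun i hi m hm => ?_⟩
        rcases Finset.mem_insert.mp hm with rfl | hm
        · exact hi₂ i (le_trans hk₂ hi)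
        · exact hi₁ i (le_trans hk₁ hi) m hm
    obtain ⟨i₀, hi₀⟩ := key N hNsub
    refine ⟨i₀, fun i hi => ?_⟩
    exact hNub (fun m hm => hi₀ i hi m hm)
end

section
/- Let P be a partially ordered set and let M be a collection of subsets of P containing all singleton sets. Then every member of σ_M is τ_M-open: if U ∈ σ_M and a net (x_i) in P M-converges to a point y ∈ U, then x_i ∈ U eventually. -/
universe u

/-- Every member of σ_M is τ_M-open. -/
theorem stmt1 {P : Type u} [PartialOrder P] (M : Set (Set P))
    (hM : ∀ p : P, {p} ∈ M) (U : Set P) (hU : U ∈ SigmaM M) :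
    TauMOpen M U := by
  obtain ⟨hUp, hSig⟩ := hU
  intro ι _ _ _ x y hy ⟨M₀, hM₀, hlb, s, hs, hys⟩
  have hsU : s ∈ U := hUp hys hy
  obtain ⟨m, hmU, hmM₀⟩ := hSig M₀ hM₀ s hs hsU
  obtain ⟨i₀, hi₀⟩ := hlb m hmM₀
  exact ⟨i₀, fun i hi => hUp (hi₀ i hi) hmU⟩
end

section
/- Let P be a partially ordered set, M a collection of subsets of P containing all singleton sets, and n = (x_i) a net in P. If n M-converges to y, then every element of ↡_M y is an eventual lower bound of n. Conversely, if P is M-continuous and every element of ↡_M y is an eventual lower bound of n, then n M-converges to y. -/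
universe u

/-- If a net `n` M-converges to `y`, then every element of `↡_M y` is an eventual lower
bound of `n`; the converse holds when `P` is M-continuous. -/
theorem stmt3 {P : Type u} [PartialOrder P] (M : Set (Set P))
    (hM : ∀ p : P, {p} ∈ M)
    (ι : Type u) [Preorder ι] [Nonempty ι]
    (hdir : ∀ i j : ι, ∃ k : ι, i ≤ k ∧ j ≤ k)
    (n : ι → P) (y : P) :
    (MConv M n y → ∀ x : P, MBelow M x y → EvLB n x) ∧
    (MCont M → (∀ x : P, MBelow M x y → EvLB n x) → MConv M n y) := by
  constructor
  · rintro ⟨M₀, hM₀, hev, s, hlub, hys⟩ x hx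
    obtain ⟨m, hm, hxm⟩ := hx M₀ hM₀ s hlub hys
    obtain ⟨i₀, hi₀⟩ := hev m hm
    exact ⟨i₀, fun i hi => hxm.trans (hi₀ i hi)⟩
  · intro hcont hev
    obtain ⟨⟨M₀, hM₀, hEq⟩, hlub⟩ := hcont y
    refine ⟨M₀, hM₀, ?_, y, ?_, le_refl y⟩
    · intro m hm
      exact hev m (by rw [Set.ext_iff] at hEq; exact (hEq m).2 ⟨m, hm, le_refl m⟩)
    · constructor
      · intro m hm
        exact hlub.1 (by rw [Set.ext_iff] at hEq; exact (hEq m).2 ⟨m, hm, le_refl m⟩)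
      · intro b hb
        refine hlub.2 ?_
        intro x hx
        rw [Set.ext_iff] at hEq
        obtain ⟨m, hm, hxm⟩ := (hEq x).1 hx
        exact hxm.trans (hb hm)
end

section
/- Let P be a partially ordered set and let M be a collection of subsets of P containing all singleton sets. If P is M-continuous, then for every subset Y ⊆ P, int_{σ_M}(↑Y) ⊆ ↟_M Y, where ↑Y is the upper closure of Y. -/
universe u

/-- If `P` is M-continuous, then `int_{σ_M}(↑Y) ⊆ ↟_M Y` for every `Y ⊆ P`. -/
theorem stmt4 {P : Type u} [PartialOrder P] (M : Set (Set P))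
    (hM : ∀ p : P, {p} ∈ M) (h : MCont M) (Y : Set P) :
    ⋃₀ {U | U ∈ SigmaM M ∧ U ⊆ {x | ∃ y ∈ Y, y ≤ x}} ⊆ {x | ∃ y ∈ Y, MBelow M y x} := by
  rintro x ⟨U, ⟨⟨hUp, hInacc⟩, hUY⟩, hxU⟩
  obtain ⟨⟨M₀, hM₀M, hEq⟩, hLub⟩ := h x
  -- M₀ has the same upper bounds as its lower closure, so IsLUB M₀ x
  have hLubM₀ : IsLUB M₀ x := by
    constructor
    · intro m hm
      exact hLub.1 (by rw [hEq]; exact ⟨m, hm, le_refl m⟩)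
    · intro b hb
      apply hLub.2
      intro z hz
      rw [hEq] at hz
      obtain ⟨m, hm, hzm⟩ := hz
      exact le_trans hzm (hb hm)
  obtain ⟨m, hmU, hmM₀⟩ := hInacc M₀ hM₀M x hLubM₀ hxU
  obtain ⟨y, hyY, hym⟩ := hUY hmU
  refine ⟨y, hyY, ?_⟩
  have hmx : MBelow M m x := by
    have : m ∈ {x_1 | MBelow M x_1 x} := by
      rw [hEq]; exact ⟨m, hmM₀, le_refl m⟩
    exact this
  intro N hN s hs hxs
  obtain ⟨n, hn, hmn⟩ := hmx N hN s hs hxs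
  exact ⟨n, hn, le_trans hym hmn⟩
end

section
/- Let P be a partially ordered set and let M be a collection of subsets of P containing all singleton sets. Then P is M-continuous if and only if for every y ∈ P there exists M₀ ∈ M having a supremum such that M₀ ⊆ ↡_M y and y ≤ ⋁M₀. -/
universe u

/-- `P` is M-continuous iff for every `y` there is `M₀ ∈ M` with a supremum,
contained in `↡_M y`, whose supremum is above `y`. -/
theorem stmt5 {P : Type u} [PartialOrder P] (M : Set (Set P))
    (hM : ∀ p : P, {p} ∈ M) :
    MCont M ↔
      ∀ y : P, ∃ M₀ ∈ M, M₀ ⊆ {x | MBelow M x y} ∧ ∃ s : P, IsLUB M₀ s ∧ y ≤ s := by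
  constructor
  · intro h y
    obtain ⟨⟨M₀, hM₀, hEq⟩, hLUB⟩ := h y
    refine ⟨M₀, hM₀, ?_, y, ?_, le_rfl⟩
    · intro m hm
      have : m ∈ {x | ∃ m ∈ M₀, x ≤ m} := ⟨m, hm, le_rfl⟩
      rw [← hEq] at this; exact this
    · rw [hEq] at hLUB
      constructor
      · intro m hm
        exact hLUB.1 ⟨m, hm, le_rfl⟩
      · intro u hu
        apply hLUB.2
        rintro x ⟨m, hm, hxm⟩
        exact le_trans hxm (hu hm)
  · intro h y
    obtain ⟨M₀, hM₀, hsub, s, hs, hys⟩ := h y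
    have hEq : {x | MBelow M x y} = {x | ∃ m ∈ M₀, x ≤ m} := by
      ext x
      constructor
      · intro hx
        exact hx M₀ hM₀ s hs hys
      · rintro ⟨m, hm, hxm⟩
        intro N hN t ht hyt
        obtain ⟨n, hn, hmn⟩ := hsub hm N hN t ht hyt
        exact ⟨n, hn, le_trans hxm hmn⟩
    refine ⟨⟨M₀, hM₀, hEq⟩, ?_, ?_⟩
    · intro x hx
      obtain ⟨m, hm, hxm⟩ := hx {y} (hM y) y isLUB_singleton le_rfl
      exact le_trans hxm (hm ▸ le_rfl)
    · intro u hu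
      have : s ≤ u := hs.2 (fun m hm => hu (hsub hm))
      exact le_trans hys this
end

section
/- Let P be a partially ordered set and let M be a collection of subsets of P containing all singleton sets. If the relation ≪_M is interpolative (i.e., x ≪_M z implies x ≪_M y ≪_M z for some y), then ↟_M Y ∈ σ_M for every subset Y ⊆ P. -/
universe u

/-- If `≪_M` is interpolative then `↟_M Y ∈ σ_M` for every `Y ⊆ P`. -/
theorem stmt6 {P : Type u} [PartialOrder P] (M : Set (Set P))
    (hM : ∀ p : P, {p} ∈ M)
    (hint : ∀ x z : P, MBelow M x z → ∃ y : P, MBelow M x y ∧ MBelow M y z)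
    (Y : Set P) :
    {x | ∃ y ∈ Y, MBelow M y x} ∈ SigmaM M := by
  constructor
  · intro a b hab ⟨y, hy, hya⟩
    exact ⟨y, hy, fun M₀ hM₀ s hs hbs => hya M₀ hM₀ s hs (le_trans hab hbs)⟩
  · rintro M₀ hM₀ s hs ⟨y, hy, hys⟩
    obtain ⟨w, hyw, hws⟩ := hint y s hys
    obtain ⟨m, hm, hwm⟩ := hws M₀ hM₀ s hs le_rfl
    exact ⟨m, ⟨y, hy, fun N hN t ht hmt => hyw N hN t ht (le_trans hwm hmt)⟩, hm⟩
end

section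
/- Let P be a partially ordered set and let M be a collection of subsets of P containing all singleton sets. If P is M-continuous, then for every y ∈ P, y is the least upper bound of ↡_M(↡_M y) = ⋃_{x ∈ ↡_M y} ↡_M x. Moreover, P is strongly M-continuous (i.e., M-continuous with ≪_M interpolative) if and only if for every y ∈ P, ↡_M(↡_M y) ∈ M^∧ and y is the least upper bound of ↡_M(↡_M y). -/
universe u

lemma mbelow_le {P : Type u} [PartialOrder P] {M : Set (Set P)}
    (hM : ∀ p : P, {p} ∈ M) {x y : P} (h : MBelow M x y) : x ≤ y := by
  obtain ⟨m, hm, hxm⟩ := h {y} (hM y) y isLUB_singleton le_rfl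
  obtain rfl : m = y := hm
  exact hxm

lemma mbelow_of_le_left {P : Type u} [PartialOrder P] {M : Set (Set P)}
    {x x' y : P} (hle : x ≤ x') (h : MBelow M x' y) : MBelow M x y := by
  intro M₀ hM₀ s hs hys
  obtain ⟨m, hm, h'⟩ := h M₀ hM₀ s hs hys
  exact ⟨m, hm, hle.trans h'⟩

lemma ub_lower {P : Type u} [PartialOrder P] (M₀ : Set P) :
    upperBounds {x : P | ∃ m ∈ M₀, x ≤ m} = upperBounds M₀ := by
  ext u
  constructor
  · intro hu m hm
    exact hu ⟨m, hm, le_rfl⟩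
  · rintro hu z ⟨m, hm, hzm⟩
    exact hzm.trans (hu hm)

/-- If `P` is M-continuous then `y = ⋁ ↡_M(↡_M y)` for every `y`; moreover `P` is strongly
M-continuous iff for every `y`, `↡_M(↡_M y) ∈ M^∧` and `y = ⋁ ↡_M(↡_M y)`. -/
theorem stmt7 {P : Type u} [PartialOrder P] (M : Set (Set P))
    (hM : ∀ p : P, {p} ∈ M) :
    (MCont M → ∀ y : P, IsLUB {z | ∃ x : P, MBelow M x y ∧ MBelow M z x} y) ∧
    ((MCont M ∧ ∀ x z : P, MBelow M x z → ∃ y : P, MBelow M x y ∧ MBelow M y z) ↔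
      ∀ y : P, {z | ∃ x : P, MBelow M x y ∧ MBelow M z x} ∈ MHat M ∧
        IsLUB {z | ∃ x : P, MBelow M x y ∧ MBelow M z x} y) := by
  have key1 : MCont M → ∀ y : P,
      IsLUB {z | ∃ x : P, MBelow M x y ∧ MBelow M z x} y := by
    intro hc y
    constructor
    · rintro z ⟨x, hxy, hzx⟩
      exact (mbelow_le hM hzx).trans (mbelow_le hM hxy)
    · intro u hu
      refine (hc y).2.2 ?_
      intro x hx
      refine (hc x).2.2 ?_
      intro z hz
      exact hu ⟨x, hx, hz⟩
  refine ⟨key1, ?_, ?_⟩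
  · rintro ⟨hc, hint⟩ y
    have hEq : {z | ∃ x : P, MBelow M x y ∧ MBelow M z x} = {z | MBelow M z y} := by
      ext z
      constructor
      · rintro ⟨x, hxy, hzx⟩
        exact mbelow_of_le_left (mbelow_le hM hzx) hxy
      · intro hz
        obtain ⟨w, hzw, hwy⟩ := hint z y hz
        exact ⟨w, hwy, hzw⟩
    rw [hEq]
    exact hc y
  · intro h
    have hint : ∀ x z : P, MBelow M x z → ∃ y : P, MBelow M x y ∧ MBelow M y z := by
      intro x y hxy
      obtain ⟨M₀, hM₀, hSeq⟩ := (h y).1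
      have hlub : IsLUB M₀ y := by
        have := (h y).2
        rw [hSeq] at this
        exact ⟨fun m hm => this.1 ⟨m, hm, le_rfl⟩, fun u hu => this.2 ((ub_lower M₀) ▸ hu)⟩
      obtain ⟨m, hm, hxm⟩ := hxy M₀ hM₀ y hlub le_rfl
      have hmS : m ∈ {z | ∃ x : P, MBelow M x y ∧ MBelow M z x} := by
        rw [hSeq]; exact ⟨m, hm, le_rfl⟩
      obtain ⟨w, hwy, hmw⟩ := hmS
      exact ⟨w, mbelow_of_le_left hxm hmw, hwy⟩
    refine ⟨?_, hint⟩
    intro y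
    have hEq : {z | ∃ x : P, MBelow M x y ∧ MBelow M z x} = {z | MBelow M z y} := by
      ext z
      constructor
      · rintro ⟨x, hxy, hzx⟩
        exact mbelow_of_le_left (mbelow_le hM hzx) hxy
      · intro hz
        obtain ⟨w, hzw, hwy⟩ := hint z y hz
        exact ⟨w, hwy, hzw⟩
    have := h y
    rw [hEq] at this
    exact this
end

section
/- Let X be a T0 topological space. Then X satisfies: for every y ∈ X, ↡_I y is the lower closure of some irreducible subset of X and y is the least upper bound of ↡_I y, if and only if for every y ∈ X, the set ↡_I y is itself irreducible and y is the least upper bound of ↡_I y. -/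
universe u

/-- The specialisation order of a topological space: `x ≤ y` iff `x ∈ closure {y}`. -/
def sle {X : Type u} [TopologicalSpace X] (x y : X) : Prop :=
  x ∈ closure ({y} : Set X)

/-- Upper bounds with respect to the specialisation order. -/
def sUB {X : Type u} [TopologicalSpace X] (A : Set X) : Set X :=
  {u | ∀ a ∈ A, sle a u}

/-- `s` is the least upper bound of `A` with respect to the specialisation order. -/
def sIsLUB {X : Type u} [TopologicalSpace X] (A : Set X) (s : X) : Prop :=
  s ∈ sUB A ∧ ∀ u ∈ sUB A, sle s u

/-- `x ≪_I y`: for every irreducible set `E` having a supremum above `y`,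
some element of `E` is above `x`. -/
def IBelow {X : Type u} [TopologicalSpace X] (x y : X) : Prop :=
  ∀ E : Set X, IsIrreducible E → ∀ s : X, sIsLUB E s → sle y s → ∃ e ∈ E, sle x e

/-- `X` is I-continuous: for every `y`, the set `↡_I y` is irreducible with
least upper bound `y`. -/
def IContinuous (X : Type u) [TopologicalSpace X] : Prop :=
  ∀ y : X, IsIrreducible {x | IBelow x y} ∧ sIsLUB {x | IBelow x y} y

/-- `X` is I-stable: `↟_I U` is open for every open `U`. -/
def IStable (X : Type u) [TopologicalSpace X] : Prop :=
  ∀ U : Set X, IsOpen U → IsOpen {x : X | ∃ a ∈ U, IBelow a x}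

/-- `X` is sup-sober: every closed irreducible set with a supremum is the closure
of that supremum. -/
def SupSober (X : Type u) [TopologicalSpace X] : Prop :=
  ∀ F : Set X, IsClosed F → IsIrreducible F → ∀ s : X, sIsLUB F s → F = closure ({s} : Set X)

/-- The collection σ_I: upper sets (w.r.t. specialisation) inaccessible by suprema of
irreducible sets. -/
def sigmaI (X : Type u) [TopologicalSpace X] : Set (Set X) :=
  {U | (∀ a ∈ U, ∀ b : X, sle a b → b ∈ U) ∧
       ∀ E : Set X, IsIrreducible E → ∀ s : X, sIsLUB E s → s ∈ U → (U ∩ E).Nonempty}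

/-- The irreducibly derived topology τ_SI: open sets inaccessible by suprema of
irreducible sets. -/
def tauSI (X : Type u) [TopologicalSpace X] : Set (Set X) :=
  {U | IsOpen U ∧ ∀ E : Set X, IsIrreducible E → ∀ s : X, sIsLUB E s → s ∈ U → (E ∩ U).Nonempty}

/-- The net `x` I-converges to `y`: there is an irreducible set `E` with a supremum above `y`,
all of whose elements are eventual lower bounds of the net. -/
def IConv {X : Type u} [TopologicalSpace X] {ι : Type u} [Preorder ι]
    (x : ι → X) (y : X) : Prop :=
  ∃ E : Set X, IsIrreducible E ∧
    (∀ e ∈ E, ∃ i₀ : ι, ∀ i : ι, i₀ ≤ i → sle e (x i)) ∧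
    ∃ s : X, sIsLUB E s ∧ sle y s

/-- `D` is directed with respect to the specialisation order. -/
def sDirectedOn {X : Type u} [TopologicalSpace X] (D : Set X) : Prop :=
  ∀ a ∈ D, ∀ b ∈ D, ∃ c ∈ D, sle a c ∧ sle b c

/-- Way-below in the specialisation poset, via nonempty directed sets. -/
def sWayBelow {X : Type u} [TopologicalSpace X] (x y : X) : Prop :=
  ∀ D : Set X, D.Nonempty → sDirectedOn D → ∀ s : X, sIsLUB D s → sle y s → ∃ d ∈ D, sle x d

/-- `X` is a DI space: the supremum of any irreducible set is also attained as the supremum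
of a nonempty directed subset of its lower closure. -/
def DISpace (X : Type u) [TopologicalSpace X] : Prop :=
  ∀ E : Set X, IsIrreducible E → ∀ s : X, sIsLUB E s →
    ∃ D : Set X, D.Nonempty ∧ sDirectedOn D ∧ (∀ d ∈ D, ∃ e ∈ E, sle d e) ∧ sIsLUB D s

/-- `U` is τ_I-open: every net that I-converges to a point of `U` is eventually in `U`. -/
def TauIOpen {X : Type u} [TopologicalSpace X] (U : Set X) : Prop :=
  ∀ (ι : Type u) [Preorder ι] [Nonempty ι],
    (∀ i j : ι, ∃ k : ι, i ≤ k ∧ j ≤ k) →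
    ∀ x : ι → X, ∀ y ∈ U, IConv x y →
    ∃ i₀ : ι, ∀ i : ι, i₀ ≤ i → x i ∈ U

lemma sle_refl {X : Type u} [TopologicalSpace X] (x : X) : sle x x :=
  subset_closure rfl

lemma sle_trans {X : Type u} [TopologicalSpace X] {x y z : X} (h1 : sle x y) (h2 : sle y z) :
    sle x z := by
  have : closure ({y} : Set X) ⊆ closure ({z} : Set X) := by
    rw [← closure_closure (s := ({z} : Set X))]
    exact closure_mono (Set.singleton_subset_iff.mpr h2)
  exact this h1

lemma lower_closure_eq {X : Type u} [TopologicalSpace X] (E : Set X) :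
    closure {x | ∃ e ∈ E, sle x e} = closure E := by
  apply subset_antisymm
  · apply closure_minimal _ isClosed_closure
    rintro x ⟨e, he, hx⟩
    have : closure ({e} : Set X) ⊆ closure E := by
      rw [← closure_closure (s := E)]
      exact closure_mono (Set.singleton_subset_iff.mpr (subset_closure he))
    exact this hx
  · exact closure_mono fun e he => ⟨e, he, sle_refl e⟩

/-- For a T0 space `X`: every `↡_I y` is the lower closure of some irreducible set with
`y = ⋁ ↡_I y`, iff every `↡_I y` is itself irreducible with `y = ⋁ ↡_I y`. -/
theorem stmt8 {X : Type u} [TopologicalSpace X] [T0Space X] :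
    (∀ y : X,
        (∃ E : Set X, IsIrreducible E ∧ {x | IBelow x y} = {x | ∃ e ∈ E, sle x e}) ∧
        sIsLUB {x | IBelow x y} y) ↔
    (∀ y : X, IsIrreducible {x | IBelow x y} ∧ sIsLUB {x | IBelow x y} y) := by
  constructor
  · intro h y
    obtain ⟨⟨E, hE, heq⟩, hlub⟩ := h y
    refine ⟨?_, hlub⟩
    rw [← isIrreducible_iff_closure, heq, lower_closure_eq]
    exact hE.closure
  · intro h y
    obtain ⟨hirr, hlub⟩ := h y
    refine ⟨⟨{x | IBelow x y}, hirr, ?_⟩, hlub⟩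
    ext x
    constructor
    · intro hx; exact ⟨x, hx, sle_refl x⟩
    · rintro ⟨e, he, hxe⟩
      intro E hE s hs hys
      obtain ⟨e', he', hee'⟩ := he E hE s hs hys
      exact ⟨e', he', sle_trans hxe hee'⟩
end

section
/- Every I-continuous, sup-sober T0 space is I-stable. -/
universe u

lemma sIsLUB_closure_singleton {X : Type u} [TopologicalSpace X] (x : X) :
    sIsLUB (closure ({x} : Set X)) x := by
  constructor
  · intro a ha; exact ha
  · intro u hu; exact hu x (subset_closure rfl)

lemma IBelow.sle {X : Type u} [TopologicalSpace X] {a x : X} (h : IBelow a x) :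
    sle a x := by
  obtain ⟨e, he, hae⟩ := h (closure ({x} : Set X))
    (isIrreducible_singleton.closure) x (sIsLUB_closure_singleton x) (sle_refl x)
  exact sle_trans hae he

lemma mem_closure_IBelow {X : Type u} [TopologicalSpace X]
    (hcont : IContinuous X) (hsober : SupSober X) (y : X) :
    y ∈ closure {x | IBelow x y} := by
  obtain ⟨hirr, hlub⟩ := hcont y
  have hub : sIsLUB (closure {x | IBelow x y}) y := by
    constructor
    · intro a ha
      have hsub : closure {x | IBelow x y} ⊆ closure ({y} : Set X) :=
        closure_minimal (fun z hz => hz.sle) isClosed_closure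
      exact hsub ha
    · intro u hu
      exact hlub.2 u (fun a ha => hu a (subset_closure ha))
  have := hsober (closure {x | IBelow x y}) isClosed_closure hirr.closure y hub
  rw [this]
  exact subset_closure rfl

/-- Every I-continuous sup-sober T0 space is I-stable. -/
theorem stmt9 {X : Type u} [TopologicalSpace X] [T0Space X]
    (hcont : IContinuous X) (hsober : SupSober X) :
    IStable X := by
  intro U hU
  have key : {x : X | ∃ a ∈ U, IBelow a x} = U := by
    ext x
    constructor
    · rintro ⟨a, haU, hax⟩
      have h1 : a ∈ closure ({x} : Set X) := hax.sle
      rcases mem_closure_iff.1 h1 U hU haU with ⟨z, hzU, hzx⟩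
      rcases hzx with rfl
      exact hzU
    · intro hx
      have h := mem_closure_IBelow hcont hsober x
      rcases mem_closure_iff.1 h U hU hx with ⟨a, haU, hax⟩
      exact ⟨a, haU, hax⟩
  rw [key]
  exact hU
end

section
/- Let X be an I-continuous T0 space. Then X is I-stable if and only if the map sending x ∈ X to ↡_I x is continuous from X to the powerset of X equipped with the topology generated by the sets ◇U = {A ⊆ X | A ∩ U ≠ ∅} for U open in X (the lower Vietoris topology). -/
universe u

/-- An I-continuous T0 space is I-stable iff `x ↦ ↡_I x` is continuous into the powerset
with the lower Vietoris topology. -/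
theorem stmt10 {X : Type u} [TopologicalSpace X] [T0Space X]
    (hcont : IContinuous X) :
    IStable X ↔
      @Continuous X (Set X) _
        (TopologicalSpace.generateFrom
          {S : Set (Set X) | ∃ U : Set X, IsOpen U ∧ S = {A : Set X | (A ∩ U).Nonempty}})
        (fun y : X => {x | IBelow x y}) := by
  rw [continuous_generateFrom_iff]
  constructor
  · rintro h S ⟨U, hU, rfl⟩
    convert h U hU using 1
    ext y
    constructor
    · rintro ⟨x, hx, hxU⟩; exact ⟨x, hxU, hx⟩
    · rintro ⟨x, hxU, hx⟩; exact ⟨x, hx, hxU⟩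
  · intro h U hU
    convert h _ ⟨U, hU, rfl⟩ using 1
    ext y
    constructor
    · rintro ⟨x, hxU, hx⟩; exact ⟨x, hx, hxU⟩
    · rintro ⟨x, hx, hxU⟩; exact ⟨x, hxU, hx⟩
end

section
/- Let X be an I-stable, I-continuous T0 space. Then for every irreducible subset E of X, the set ↡_I E = ⋃_{e ∈ E} ↡_I e is irreducible. -/
universe u

/-- In an I-stable I-continuous T0 space, `↡_I E` is irreducible for every irreducible `E`. -/
theorem stmt11 {X : Type u} [TopologicalSpace X] [T0Space X]
    (hstable : IStable X) (hcont : IContinuous X)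
    (E : Set X) (hE : IsIrreducible E) :
    IsIrreducible {x : X | ∃ e ∈ E, IBelow x e} := by
  constructor
  · obtain ⟨e, he⟩ := hE.nonempty
    obtain ⟨x, hx⟩ := (hcont e).1.nonempty
    exact ⟨x, e, he, hx⟩
  · intro U V hU hV ⟨a, ⟨e₁, he₁, ha⟩, haU⟩ ⟨b, ⟨e₂, he₂, hb⟩, hbV⟩
    have h1 := hE.2 _ _ (hstable U hU) (hstable V hV)
      ⟨e₁, he₁, a, haU, ha⟩ ⟨e₂, he₂, b, hbV, hb⟩
    obtain ⟨e, heE, ⟨a', ha'U, ha'⟩, ⟨b', hb'V, hb'⟩⟩ := h1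
    obtain ⟨c, hc, hcU, hcV⟩ := (hcont e).1.2 U V hU hV ⟨a', ha', ha'U⟩ ⟨b', hb', hb'V⟩
    exact ⟨c, ⟨e, heE, hc⟩, hcU, hcV⟩
end

section
/- Let X be an I-continuous T0 space such that ↟_I x ∈ σ_I for every x ∈ X. Then the relation ≪_I has the interpolation property: whenever x ≪_I z, there exists y ∈ X with x ≪_I y and y ≪_I z. -/
universe u

/-- If `X` is I-continuous and `↟_I x ∈ σ_I` for all `x`, then `≪_I` interpolates. -/
theorem stmt14 {X : Type u} [TopologicalSpace X] [T0Space X]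
    (hcont : IContinuous X)
    (hsig : ∀ x : X, {z : X | IBelow x z} ∈ sigmaI X)
    (x z : X) (hxz : IBelow x z) :
    ∃ y : X, IBelow x y ∧ IBelow y z := by
  obtain ⟨hirr, hlub⟩ := hcont z
  obtain ⟨_, hinacc⟩ := hsig x
  obtain ⟨y, hy1, hy2⟩ := hinacc _ hirr z hlub hxz
  exact ⟨y, hy1, hy2⟩
end
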